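/- arXiv:2401.16088 — 2 statements merged into one kernel-verified Lean document; each statement's English description precedes it below -/
import Mathlib

section
/- Let X_a ~ N(μ_a, σ²) and X_d ~ N(μ_d, σ²) with μ_d < μ_a ≤ s. Then the expected distance to the decision boundary among negatively classified agents satisfies E[s − X_d | X_d < s] > E[s − X_a | X_a < s]; i.e., conditional on receiving a negative outcome, the disadvantaged population is farther in expectation from the threshold. -/
open MeasureTheory ProbabilityTheory Set Real Filter Topology
open scoped ENNReal NNReal

namespace S8

noncomputable def g (v x : ℝ) : ℝ := Real.exp (-x ^ 2 / (2 * v))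
noncomputable def G (v t : ℝ) : ℝ := ∫ x in Iio t, g v x
noncomputable def H (v t : ℝ) : ℝ := ∫ x in Iio t, x * g v x
noncomputable def F (v t : ℝ) : ℝ := ∫ x in Iio t, (t - x) * g v x

variable {v : ℝ}

lemma g_pos (x : ℝ) : 0 < g v x := Real.exp_pos _

lemma g_even (t : ℝ) : g v (-t) = g v t := by
  unfold g; congr 1; ring

lemma g_cont : Continuous (g v) := by
  unfold g; fun_prop

lemma int_g (hv : 0 < v) : Integrable (g v) := by
  have h : g v = fun x => Real.exp (-(2 * v)⁻¹ * x ^ 2) := by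
    funext x
    show Real.exp _ = _
    congr 1
    field_simp
  rw [h]
  exact integrable_exp_neg_mul_sq (by positivity)

lemma int_xg (hv : 0 < v) : Integrable (fun x => x * g v x) := by
  have h : (fun x => x * g v x) = fun x => x * Real.exp (-(2 * v)⁻¹ * x ^ 2) := by
    funext x
    show x * Real.exp _ = _
    congr 2
    field_simp
  rw [h]
  exact integrable_mul_exp_neg_mul_sq (by positivity)

lemma int_absxg (hv : 0 < v) : Integrable (fun x => |x| * g v x) := by
  refine ((int_xg hv).abs).congr (ae_of_all _ fun x => ?_)
  show |x * g v x| = _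
  rw [abs_mul, abs_of_pos (g_pos x)]

lemma g_hasDeriv (hv : 0 < v) (t : ℝ) : HasDerivAt (g v) (-(t / v) * g v t) t := by
  have h1 : HasDerivAt (fun x : ℝ => -x ^ 2 / (2 * v)) (-(2 * t) / (2 * v)) t := by
    simpa using ((hasDerivAt_pow 2 t).neg.div_const (2 * v))
  have h2 := h1.exp
  have hne : v ≠ 0 := ne_of_gt hv
  convert h2 using 1
  unfold g
  field_simp
  simp only [g]
  ring

lemma primitive_hasDeriv {f : ℝ → ℝ} (hf : Integrable f) (hc : Continuous f) (t : ℝ) :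
    HasDerivAt (fun u => ∫ x in Iio u, f x) (f t) t := by
  have key : ∀ u : ℝ, ∫ x in Iio u, f x = (∫ x in Iic (0:ℝ), f x) + ∫ x in (0:ℝ)..u, f x := by
    intro u
    have e1 : ∫ x in Iio u, f x = ∫ x in Iic u, f x := setIntegral_congr_set Iio_ae_eq_Iic
    have e2 := intervalIntegral.integral_Iic_sub_Iic (f := f) (μ := volume) (a := (0:ℝ)) (b := u)
      hf.integrableOn hf.integrableOn
    linarith
  have hd : HasDerivAt (fun u => (∫ x in Iic (0:ℝ), f x) + ∫ x in (0:ℝ)..u, f x) (f t) t :=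
    (intervalIntegral.integral_hasDerivAt_right hf.intervalIntegrable
      (hc.stronglyMeasurable.stronglyMeasurableAtFilter) hc.continuousAt).const_add _
  have : (fun u => ∫ x in Iio u, f x)
      = fun u => (∫ x in Iic (0:ℝ), f x) + ∫ x in (0:ℝ)..u, f x := funext key
  rw [this]
  exact hd

lemma G_hasDeriv (hv : 0 < v) (t : ℝ) : HasDerivAt (G v) (g v t) t :=
  primitive_hasDeriv (int_g hv) g_cont t

lemma H_hasDeriv (hv : 0 < v) (t : ℝ) : HasDerivAt (H v) (t * g v t) t :=
  primitive_hasDeriv (int_xg hv) (continuous_id.mul g_cont) t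

lemma G_pos (hv : 0 < v) (t : ℝ) : 0 < G v t := by
  rw [G, setIntegral_pos_iff_support_of_nonneg_ae
    (ae_of_all _ fun x => (g_pos x).le) (int_g hv).integrableOn]
  have hs : Function.support (g v) = univ := by
    ext x; simp [Function.support, (g_pos (v := v) x).ne']
  rw [hs, univ_inter, Real.volume_Iio]
  simp

lemma int_tsub (hv : 0 < v) (t : ℝ) : Integrable (fun x => (t - x) * g v x) := by
  have : (fun x => (t - x) * g v x) = fun x => t * g v x - x * g v x := by
    funext x; ring
  rw [this]
  exact ((int_g hv).const_mul t).sub (int_xg hv)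

lemma F_pos (hv : 0 < v) (t : ℝ) : 0 < F v t := by
  rw [F, setIntegral_pos_iff_support_of_nonneg_ae]
  · have hsub : Iio t ⊆ (Function.support fun x => (t - x) * g v x) ∩ Iio t := by
      intro x hx
      have hx' : x < t := hx
      have hpos : 0 < (t - x) * g v x := mul_pos (by linarith) (g_pos x)
      exact ⟨Function.mem_support.2 hpos.ne', hx⟩
    have h0 : (0:ENNReal) < volume (Iio t) := by rw [Real.volume_Iio]; simp
    exact lt_of_lt_of_le h0 (measure_mono hsub)
  · refine (ae_restrict_iff' measurableSet_Iio).2 (ae_of_all _ fun x hx => ?_)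
    have hx' : x < t := hx
    exact (mul_pos (by linarith) (g_pos (v := v) x)).le
  · exact (int_tsub hv t).integrableOn

lemma F_eq (hv : 0 < v) (t : ℝ) : F v t = t * G v t - H v t := by
  have h1 : ∀ x : ℝ, (t - x) * g v x = t * g v x - x * g v x := fun x => by ring
  rw [F]
  simp_rw [h1]
  rw [integral_sub (((int_g hv).const_mul t).integrableOn) (int_xg hv).integrableOn,
    integral_const_mul]
  rfl

/-! ### Tail limits at `-∞` -/

lemma tendn (n : ℕ) {c : ℝ} (hc : 0 < c) :
    Tendsto (fun y : ℝ => y ^ n * Real.exp (-(c * y))) atTop (𝓝 0) := by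
  have h1 : Tendsto (fun y : ℝ => c * y) atTop atTop :=
    Tendsto.const_mul_atTop hc tendsto_id
  have h2 := (tendsto_pow_mul_exp_neg_atTop_nhds_zero n).comp h1
  have h3 := h2.const_mul ((c⁻¹) ^ n)
  rw [mul_zero] at h3
  refine h3.congr fun y => ?_
  simp only [Function.comp_apply]
  rw [mul_pow]
  field_simp
  rw [← mul_pow, one_div, inv_mul_cancel₀ hc.ne', one_pow, one_mul]

lemma pow_g_tendsto (hv : 0 < v) (n : ℕ) :
    Tendsto (fun y : ℝ => y ^ n * g v y) atTop (𝓝 0) := by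
  refine squeeze_zero' ?_ ?_ (tendn n (c := (2 * v)⁻¹) (by positivity))
  · filter_upwards [eventually_ge_atTop 0] with y hy
    exact mul_nonneg (by positivity) (g_pos y).le
  · filter_upwards [eventually_ge_atTop 1] with y hy
    refine mul_le_mul_of_nonneg_left ?_ (by positivity)
    unfold g
    rw [Real.exp_le_exp]
    have h1 : -y ^ 2 / (2 * v) = -((2 * v)⁻¹ * y ^ 2) := by field_simp
    rw [h1, neg_le_neg_iff]
    exact mul_le_mul_of_nonneg_left (by nlinarith) (by positivity)

lemma g_bot (hv : 0 < v) : Tendsto (fun t : ℝ => g v t) atBot (𝓝 0) := by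
  have h := (pow_g_tendsto hv 0).comp tendsto_neg_atBot_atTop
  refine h.congr fun t => ?_
  simp [Function.comp, g_even]

lemma tg_bot (hv : 0 < v) : Tendsto (fun t : ℝ => t * g v t) atBot (𝓝 0) := by
  have h := ((pow_g_tendsto hv 1).comp tendsto_neg_atBot_atTop).neg
  rw [neg_zero] at h
  refine h.congr fun t => ?_
  simp only [Function.comp_apply, pow_one, g_even]
  ring

lemma t2g_bot (hv : 0 < v) : Tendsto (fun t : ℝ => t ^ 2 * g v t) atBot (𝓝 0) := by
  have h := (pow_g_tendsto hv 2).comp tendsto_neg_atBot_atTop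
  refine h.congr fun t => ?_
  simp only [Function.comp_apply, g_even, neg_sq]

lemma g_le (hv : 0 < v) {t x : ℝ} (ht : t ≤ 0) (hx : x < t) :
    g v x ≤ g (2 * v) t * g (2 * v) x := by
  unfold g
  rw [← Real.exp_add, Real.exp_le_exp, ← add_div, div_le_div_iff₀ (by positivity) (by positivity)]
  have hx2 : t ^ 2 <= x ^ 2 := by nlinarith
  nlinarith [mul_le_mul_of_nonneg_left hx2 hv.le]

lemma G_bound (hv : 0 < v) {t : ℝ} (ht : t ≤ 0) :
    G v t ≤ g (2 * v) t * ∫ x, g (2 * v) x := by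
  have h2v : 0 < 2 * v := by linarith
  calc G v t ≤ ∫ x in Iio t, g (2 * v) t * g (2 * v) x := by
        refine setIntegral_mono_on (int_g hv).integrableOn
          (((int_g h2v).const_mul _).integrableOn) measurableSet_Iio fun x hx => ?_
        exact g_le hv ht hx
    _ = g (2 * v) t * ∫ x in Iio t, g (2 * v) x := integral_const_mul _ _
    _ ≤ g (2 * v) t * ∫ x, g (2 * v) x := by
        refine mul_le_mul_of_nonneg_left ?_ (g_pos t).le
        exact setIntegral_le_integral (int_g h2v) (ae_of_all _ fun x => (g_pos x).le)

lemma G_bot (hv : 0 < v) : Tendsto (G v) atBot (𝓝 0) := by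
  have h2v : 0 < 2 * v := by linarith
  have hb : Tendsto (fun t : ℝ => g (2 * v) t * ∫ x, g (2 * v) x) atBot (𝓝 0) := by
    simpa using (g_bot h2v).mul_const (∫ x, g (2 * v) x)
  refine squeeze_zero' (Eventually.of_forall fun t => (G_pos hv t).le) ?_ hb
  filter_upwards [eventually_le_atBot 0] with t ht
  exact G_bound hv ht

lemma t2G_bot (hv : 0 < v) : Tendsto (fun t : ℝ => t ^ 2 * G v t) atBot (𝓝 0) := by
  have h2v : 0 < 2 * v := by linarith
  have hb : Tendsto (fun t : ℝ => (t ^ 2 * g (2 * v) t) * ∫ x, g (2 * v) x) atBot (𝓝 0) := by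
    simpa using (t2g_bot h2v).mul_const (∫ x, g (2 * v) x)
  refine squeeze_zero' (Eventually.of_forall fun t =>
      mul_nonneg (sq_nonneg t) (G_pos hv t).le) ?_ hb
  filter_upwards [eventually_le_atBot 0] with t ht
  calc t ^ 2 * G v t ≤ t ^ 2 * (g (2 * v) t * ∫ x, g (2 * v) x) :=
        mul_le_mul_of_nonneg_left (G_bound hv ht) (sq_nonneg t)
    _ = (t ^ 2 * g (2 * v) t) * ∫ x, g (2 * v) x := by ring

lemma H_bot (hv : 0 < v) : Tendsto (H v) atBot (𝓝 0) := by
  have h2v : 0 < 2 * v := by linarith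
  have hb : Tendsto (fun t : ℝ => g (2 * v) t * ∫ x, |x| * g (2 * v) x) atBot (𝓝 0) := by
    simpa using (g_bot h2v).mul_const (∫ x, |x| * g (2 * v) x)
  refine squeeze_zero_norm' ?_ hb
  filter_upwards [eventually_le_atBot 0] with t ht
  have h1 : ‖H v t‖ ≤ ∫ x in Iio t, ‖x * g v x‖ := norm_integral_le_integral_norm _
  have h2 : ∀ x : ℝ, ‖x * g v x‖ = |x| * g v x := fun x => by
    rw [Real.norm_eq_abs, abs_mul, abs_of_pos (g_pos x)]
  refine h1.trans ?_
  simp_rw [h2]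
  calc (∫ x in Iio t, |x| * g v x)
      ≤ ∫ x in Iio t, g (2 * v) t * (|x| * g (2 * v) x) := by
        refine setIntegral_mono_on (int_absxg hv).integrableOn
          (((int_absxg h2v).const_mul _).integrableOn) measurableSet_Iio fun x hx => ?_
        calc |x| * g v x ≤ |x| * (g (2 * v) t * g (2 * v) x) :=
              mul_le_mul_of_nonneg_left (g_le hv ht hx) (abs_nonneg x)
          _ = g (2 * v) t * (|x| * g (2 * v) x) := by ring
    _ = g (2 * v) t * ∫ x in Iio t, |x| * g (2 * v) x := integral_const_mul _ _
    _ ≤ g (2 * v) t * ∫ x, |x| * g (2 * v) x := by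
        refine mul_le_mul_of_nonneg_left ?_ (g_pos t).le
        exact setIntegral_le_integral (int_absxg h2v)
          (ae_of_all _ fun x => mul_nonneg (abs_nonneg x) (g_pos x).le)

/-! ### Closed form for `H` and `F` -/

lemma H_eq (hv : 0 < v) (t : ℝ) : H v t = -v * g v t := by
  have hne : v ≠ 0 := ne_of_gt hv
  have hD : ∀ u : ℝ, HasDerivAt (fun u => H v u + v * g v u) 0 u := by
    intro u
    have h1 := (H_hasDeriv hv u).add ((g_hasDeriv hv u).const_mul v)
    refine h1.congr_deriv ?_
    field_simp
    ring
  have hdiff : Differentiable ℝ (fun u => H v u + v * g v u) :=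
    fun u => (hD u).differentiableAt
  have hconst : ∀ a b : ℝ, H v a + v * g v a = H v b + v * g v b := fun a b =>
    is_const_of_deriv_eq_zero hdiff (fun x => (hD x).deriv) a b
  have hlim : Tendsto (fun u => H v u + v * g v u) atBot (𝓝 0) := by
    simpa using (H_bot hv).add ((g_bot hv).const_mul v)
  have hlim2 : Tendsto (fun u : ℝ => H v t + v * g v t) atBot (𝓝 (H v t + v * g v t)) :=
    tendsto_const_nhds
  have heq : (fun u : ℝ => H v u + v * g v u) = fun _ : ℝ => H v t + v * g v t :=
    funext fun u => hconst u t
  rw [heq] at hlim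
  have := tendsto_nhds_unique hlim hlim2
  linarith

lemma F_closed (hv : 0 < v) (t : ℝ) : F v t = t * G v t + v * g v t := by
  rw [F_eq hv, H_eq hv]; ring

/-! ### The auxiliary functions `M` and `P` -/

noncomputable def M (v t : ℝ) : ℝ := (v + t ^ 2) * G v t + t * v * g v t

noncomputable def P (v t : ℝ) : ℝ := G v t ^ 2 - t * g v t * G v t - v * g v t ^ 2

lemma M_hasDeriv (hv : 0 < v) (t : ℝ) : HasDerivAt (M v) (2 * F v t) t := by
  have hne : v ≠ 0 := ne_of_gt hv
  have ha : HasDerivAt (fun u : ℝ => v + u ^ 2) (2 * t) t := by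
    simpa using (hasDerivAt_pow 2 t).const_add v
  have h1 := ha.mul (G_hasDeriv hv t)
  have hb : HasDerivAt (fun u : ℝ => u * v) v t := by
    simpa using (hasDerivAt_id t).mul_const v
  have h2 := hb.mul (g_hasDeriv hv t)
  have h3 := h1.add h2
  refine h3.congr_deriv ?_
  rw [F_closed hv]
  field_simp
  ring

lemma M_bot (hv : 0 < v) : Tendsto (M v) atBot (𝓝 0) := by
  have h1 : Tendsto (fun t : ℝ => v * G v t + t ^ 2 * G v t + v * (t * g v t)) atBot (𝓝 0) := by
    simpa using (((G_bot hv).const_mul v).add (t2G_bot hv)).add ((tg_bot hv).const_mul v)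
  refine h1.congr fun t => ?_
  unfold M; ring

lemma M_pos (hv : 0 < v) (t : ℝ) : 0 < M v t := by
  have hmono : StrictMono (M v) := strictMono_of_deriv_pos fun x => by
    rw [(M_hasDeriv hv x).deriv]
    have := F_pos hv x
    linarith
  have h0 : 0 ≤ M v (t - 1) := by
    refine le_of_tendsto (M_bot hv) ?_
    filter_upwards [eventually_le_atBot (t - 1)] with u hu
    exact hmono.monotone hu
  have := hmono (show t - 1 < t by linarith)
  linarith

lemma P_hasDeriv (hv : 0 < v) (t : ℝ) : HasDerivAt (P v) (g v t / v * M v t) t := by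
  have hne : v ≠ 0 := ne_of_gt hv
  have hG := G_hasDeriv hv t
  have hg := g_hasDeriv hv t
  have h1 : HasDerivAt (fun u => G v u ^ 2) (2 * G v t * g v t) t := by
    simpa using (hG.fun_pow 2)
  have h2 : HasDerivAt (fun u => u * g v u * G v u)
      ((1 * g v t + t * (-(t / v) * g v t)) * G v t + t * g v t * g v t) t :=
    ((hasDerivAt_id t).mul hg).mul hG
  have h3 : HasDerivAt (fun u => v * g v u ^ 2) (v * (2 * g v t * (-(t / v) * g v t))) t := by
    simpa using (hg.pow 2).const_mul v
  have h4 := (h1.sub h2).sub h3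
  refine h4.congr_deriv ?_
  unfold M
  field_simp
  ring

lemma P_bot (hv : 0 < v) : Tendsto (P v) atBot (𝓝 0) := by
  have h1 : Tendsto (fun t : ℝ => G v t * G v t - (t * g v t) * G v t - v * (g v t * g v t))
      atBot (𝓝 0) := by
    simpa using (((G_bot hv).mul (G_bot hv)).sub ((tg_bot hv).mul (G_bot hv))).sub
      (((g_bot hv).mul (g_bot hv)).const_mul v)
  refine h1.congr fun t => ?_
  unfold P; ring

lemma P_pos (hv : 0 < v) (t : ℝ) : 0 < P v t := by
  have hmono : StrictMono (P v) := strictMono_of_deriv_pos fun x => by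
    rw [(P_hasDeriv hv x).deriv]
    exact mul_pos (div_pos (g_pos x) hv) (M_pos hv x)
  have h0 : 0 ≤ P v (t - 1) := by
    refine le_of_tendsto (P_bot hv) ?_
    filter_upwards [eventually_le_atBot (t - 1)] with u hu
    exact hmono.monotone hu
  have := hmono (show t - 1 < t by linarith)
  linarith

lemma F_hasDeriv (hv : 0 < v) (t : ℝ) : HasDerivAt (F v) (G v t) t := by
  have hne : v ≠ 0 := ne_of_gt hv
  have : F v = fun u => u * G v u + v * g v u := funext (F_closed hv)
  rw [this]
  have h1 := (hasDerivAt_id t).mul (G_hasDeriv hv t)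
  have h2 := (g_hasDeriv hv t).const_mul v
  have h3 := h1.add h2
  refine h3.congr_deriv ?_
  field_simp
  simp only [id]
  ring

lemma ratio_strictMono (hv : 0 < v) : StrictMono (fun t => F v t / G v t) := by
  refine strictMono_of_deriv_pos fun t => ?_
  have hd : HasDerivAt (fun t => F v t / G v t) (P v t / G v t ^ 2) t := by
    have h := (F_hasDeriv hv t).div (G_hasDeriv hv t) (G_pos hv t).ne'
    refine h.congr_deriv ?_
    rw [F_closed hv, P]
    ring
  rw [hd.deriv]
  exact div_pos (P_pos hv t) (pow_pos (G_pos hv t) 2)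

/-! ### Reduction of the Gaussian statement -/

lemma shift_Iio (f : ℝ → ℝ) (μ s : ℝ) :
    ∫ x in Iio s, f (x - μ) = ∫ y in Iio (s - μ), f y := by
  rw [← integral_indicator measurableSet_Iio, ← integral_indicator measurableSet_Iio,
    ← integral_sub_right_eq_self (fun y => (Iio (s - μ)).indicator f y) μ]
  congr 1
  funext x
  by_cases h : x < s
  · simp [indicator_apply, mem_Iio, h, sub_lt_sub_iff_right]
  · simp [indicator_apply, mem_Iio, h, sub_lt_sub_iff_right]

lemma gauss_int (μ s : ℝ) (σ2 : NNReal) (hσ2 : σ2 ≠ 0) (φ : ℝ → ℝ) :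
    ∫ x in Iio s, φ x ∂(gaussianReal μ σ2)
      = ∫ x in Iio s, gaussianPDFReal μ σ2 x * φ x := by
  rw [gaussianReal_of_var_ne_zero _ hσ2]
  show ∫ x, φ x ∂((volume.withDensity (gaussianPDF μ σ2)).restrict (Iio s)) = _
  rw [restrict_withDensity measurableSet_Iio]
  have hpdf : gaussianPDF μ σ2
      = fun x => (((gaussianPDFReal μ σ2 x).toNNReal : ℝ≥0) : ℝ≥0∞) := rfl
  rw [hpdf, integral_withDensity_eq_integral_smul
    ((measurable_gaussianPDFReal μ σ2).real_toNNReal)]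
  refine integral_congr_ae (ae_of_all _ fun x => ?_)
  show (gaussianPDFReal μ σ2 x).toNNReal • φ x = gaussianPDFReal μ σ2 x * φ x
  rw [NNReal.smul_def, smul_eq_mul, Real.coe_toNNReal _ (gaussianPDFReal_nonneg μ σ2 x)]

lemma gauss_num (μ s : ℝ) (σ2 : NNReal) (hσ2 : σ2 ≠ 0) :
    ∫ x in Iio s, (s - x) ∂(gaussianReal μ σ2)
      = (Real.sqrt (2 * π * (σ2 : ℝ)))⁻¹ * F (σ2 : ℝ) (s - μ) := by
  rw [gauss_int μ s σ2 hσ2]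
  calc ∫ x in Iio s, gaussianPDFReal μ σ2 x * (s - x)
      = ∫ x in Iio s,
          (fun y => (Real.sqrt (2 * π * (σ2 : ℝ)))⁻¹ * (((s - μ) - y) * g (σ2 : ℝ) y)) (x - μ) := by
        refine setIntegral_congr_fun measurableSet_Iio fun x _ => ?_
        show _ = (Real.sqrt (2 * π * (σ2 : ℝ)))⁻¹ * (((s - μ) - (x - μ)) * g (σ2 : ℝ) (x - μ))
        simp only [gaussianPDFReal, g]
        ring
    _ = ∫ y in Iio (s - μ), (Real.sqrt (2 * π * (σ2 : ℝ)))⁻¹ * (((s - μ) - y) * g (σ2 : ℝ) y) :=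
        shift_Iio (fun y => (Real.sqrt (2 * π * (σ2 : ℝ)))⁻¹ * (((s - μ) - y) * g (σ2 : ℝ) y)) μ s
    _ = (Real.sqrt (2 * π * (σ2 : ℝ)))⁻¹ * F (σ2 : ℝ) (s - μ) := by
        rw [integral_const_mul]; rfl

lemma gauss_den (μ s : ℝ) (σ2 : NNReal) (hσ2 : σ2 ≠ 0) :
    ((gaussianReal μ σ2) (Iio s)).toReal
      = (Real.sqrt (2 * π * (σ2 : ℝ)))⁻¹ * G (σ2 : ℝ) (s - μ) := by
  rw [gaussianReal_apply_eq_integral _ hσ2,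
    ENNReal.toReal_ofReal (setIntegral_nonneg measurableSet_Iio
      fun x _ => gaussianPDFReal_nonneg μ σ2 x)]
  calc ∫ x in Iio s, gaussianPDFReal μ σ2 x
      = ∫ x in Iio s, (fun y => (Real.sqrt (2 * π * (σ2 : ℝ)))⁻¹ * g (σ2 : ℝ) y) (x - μ) := by
        refine setIntegral_congr_fun measurableSet_Iio fun x _ => ?_
        rfl
    _ = ∫ y in Iio (s - μ), (Real.sqrt (2 * π * (σ2 : ℝ)))⁻¹ * g (σ2 : ℝ) y :=
        shift_Iio (fun y => (Real.sqrt (2 * π * (σ2 : ℝ)))⁻¹ * g (σ2 : ℝ) y) μ s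
    _ = (Real.sqrt (2 * π * (σ2 : ℝ)))⁻¹ * G (σ2 : ℝ) (s - μ) := by
        rw [integral_const_mul]; rfl

end S8

/-- for Gaussian scores with equal nondegenerate variances and
`μd < μa ≤ s`, the expected distance to the decision boundary among the
negatively classified is strictly larger for the disadvantaged population:
`E[s - Xd | Xd < s] > E[s - Xa | Xa < s]`. -/
theorem stmt8 (μa μd s : ℝ) (σ2 : NNReal) (hσ2 : σ2 ≠ 0)
    (hμ : μd < μa) (hμs : μa ≤ s) :
    (∫ x in Iio s, (s - x) ∂(gaussianReal μa σ2)) /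
        ((gaussianReal μa σ2) (Iio s)).toReal
      < (∫ x in Iio s, (s - x) ∂(gaussianReal μd σ2)) /
          ((gaussianReal μd σ2) (Iio s)).toReal := by
  have hv : 0 < (σ2 : ℝ) := by
    have : 0 < σ2 := zero_lt_iff.mpr hσ2
    exact_mod_cast this
  have hc : (0:ℝ) < (Real.sqrt (2 * Real.pi * (σ2 : ℝ)))⁻¹ := by
    have h2 : 0 < 2 * Real.pi * (σ2 : ℝ) := by positivity
    positivity
  rw [S8.gauss_num μa s σ2 hσ2, S8.gauss_den μa s σ2 hσ2,
    S8.gauss_num μd s σ2 hσ2, S8.gauss_den μd s σ2 hσ2,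
    mul_div_mul_left _ _ hc.ne', mul_div_mul_left _ _ hc.ne']
  exact S8.ratio_strictMono hv (show s - μa < s - μd by linarith)
end

section
/- If the score distributions of P^a and P^d are identical finite multisets (same sorted sequence of scores), then CNS with k/2 from each population selects a set whose total score equals the maximum total score achievable by any size-k subset containing exactly k/2 members of each population, and moreover equals the unconstrained top-k total when ties are broken suitably. -/
open Finset

lemma top_sum_max {α : Type*} [DecidableEq α] (P Sa B : Finset α) (score : α → ℝ)
    (hB : B ⊆ P) (hcard : B.card = Sa.card)
    (htop : ∀ x ∈ Sa, ∀ y ∈ P \ Sa, score y ≤ score x) :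
    ∑ x ∈ B, score x ≤ ∑ x ∈ Sa, score x := by
  have h1 := Finset.sum_inter_add_sum_sdiff B Sa score
  have h2 := Finset.sum_inter_add_sum_sdiff Sa B score
  have hc : (B \ Sa).card = (Sa \ B).card := by
    have := Finset.card_inter_add_card_sdiff B Sa
    have := Finset.card_inter_add_card_sdiff Sa B
    rw [Finset.inter_comm] at this
    omega
  have key : ∑ x ∈ B \ Sa, score x ≤ ∑ x ∈ Sa \ B, score x := by
    rcases Finset.eq_empty_or_nonempty (Sa \ B) with he | hne
    · have : B \ Sa = ∅ := Finset.card_eq_zero.mp (by rw [hc, he]; simp)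
      rw [this, he]
    · set c := (Sa \ B).inf' hne score with hcdef
      have hub : ∀ x ∈ B \ Sa, score x ≤ c := by
        intro x hx
        apply Finset.le_inf'
        intro y hy
        exact htop y (Finset.sdiff_subset hy) x
          (Finset.mem_sdiff.mpr ⟨hB (Finset.mem_sdiff.mp hx).1, (Finset.mem_sdiff.mp hx).2⟩)
      calc ∑ x ∈ B \ Sa, score x ≤ (B \ Sa).card • c := Finset.sum_le_card_nsmul _ _ _ hub
        _ = (Sa \ B).card • c := by rw [hc]
        _ ≤ ∑ x ∈ Sa \ B, score x :=
            Finset.card_nsmul_le_sum _ _ _ (fun y hy => Finset.inf'_le _ hy)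
  rw [Finset.inter_comm Sa B] at h2
  linarith

lemma count_eq {α : Type*} [DecidableEq α] (Pa Pd : Finset α) (score : α → ℝ)
    (hident : Multiset.map score Pa.val = Multiset.map score Pd.val) (t : ℝ) :
    (Pa.filter (fun z => t ≤ score z)).card = (Pd.filter (fun z => t ≤ score z)).card := by
  have h : Multiset.filter (fun r => t ≤ r) (Pa.val.map score)
      = Multiset.filter (fun r => t ≤ r) (Pd.val.map score) := by rw [hident]
  have := congrArg Multiset.card h
  simpa [Multiset.filter_map, Multiset.card_map, Finset.card, Finset.filter_val,
    Function.comp] using this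

lemma cross_top {α : Type*} [DecidableEq α] (Pa Pd : Finset α) (score : α → ℝ)
    (hident : Multiset.map score Pa.val = Multiset.map score Pd.val)
    (Sa Sd : Finset α) (hSaP : Sa ⊆ Pa) (hSdP : Sd ⊆ Pd)
    (hcards : Sa.card = Sd.card)
    (hSatop : ∀ x ∈ Sa, ∀ y ∈ Pa \ Sa, score y ≤ score x)
    (hSdtop : ∀ x ∈ Sd, ∀ y ∈ Pd \ Sd, score y ≤ score x) :
    ∀ x ∈ Sa, ∀ y ∈ Pd \ Sd, score y ≤ score x := by
  intro x hx y hy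
  by_contra h
  push_neg at h
  set t := score y with ht
  rcases Finset.mem_sdiff.mp hy with ⟨hyPd, hySd⟩
  have h1 : Sd ⊂ Pd.filter (fun z => t ≤ score z) := by
    rw [Finset.ssubset_iff_of_subset]
    · exact ⟨y, Finset.mem_filter.mpr ⟨hyPd, le_refl t⟩, hySd⟩
    · intro z hz
      exact Finset.mem_filter.mpr ⟨hSdP hz, hSdtop z hz y hy⟩
  have h2 : Pa.filter (fun z => t ≤ score z) ⊂ Sa := by
    rw [Finset.ssubset_iff_of_subset]
    · refine ⟨x, hx, fun hxmem => ?_⟩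
      exact absurd (Finset.mem_filter.mp hxmem).2 (not_le.mpr h)
    · intro z hz
      rcases Finset.mem_filter.mp hz with ⟨hzPa, hzt⟩
      by_contra hzSa
      have := hSatop x hx z (Finset.mem_sdiff.mpr ⟨hzPa, hzSa⟩)
      linarith
  have := count_eq Pa Pd score hident t
  have c1 := Finset.card_lt_card h1
  have c2 := Finset.card_lt_card h2
  omega

/-- if the score multisets of the two disjoint equal-size
populations coincide, then the CNS selection `S = Sa ∪ Sd` (top-`k/2` from each
population) maximizes total score among all size-`k` subsets containing exactly
`k/2` members of each population, and moreover there is a tie-broken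
unconstrained top-`k` set `T` whose total score equals that of `S`. -/
theorem stmt16 {α : Type*} [DecidableEq α] (Pa Pd : Finset α) (score : α → ℝ)
    (hdisj : Disjoint Pa Pd) (n : ℕ) (hna : Pa.card = n) (hnd : Pd.card = n)
    (hident : Multiset.map score Pa.val = Multiset.map score Pd.val)
    (k : ℕ) (hkpos : 0 < k) (hk : Even k) (hkn : k / 2 ≤ n)
    (Sa Sd : Finset α)
    (hSaP : Sa ⊆ Pa) (hSdP : Sd ⊆ Pd)
    (hSacard : Sa.card = k / 2) (hSdcard : Sd.card = k / 2)
    (hSatop : ∀ x ∈ Sa, ∀ y ∈ Pa \ Sa, score y ≤ score x)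
    (hSdtop : ∀ x ∈ Sd, ∀ y ∈ Pd \ Sd, score y ≤ score x)
    (S : Finset α) (hS : S = Sa ∪ Sd) :
    (∀ U : Finset α, U ⊆ Pa ∪ Pd → U.card = k →
        (U ∩ Pa).card = k / 2 → (U ∩ Pd).card = k / 2 →
        ∑ x ∈ U, score x ≤ ∑ x ∈ S, score x)
      ∧ ∃ T : Finset α, T ⊆ Pa ∪ Pd ∧ T.card = k ∧
          (∀ x ∈ T, ∀ y ∈ (Pa ∪ Pd) \ T, score y ≤ score x) ∧
          ∑ x ∈ T, score x = ∑ x ∈ S, score x := by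
  have hdisjS : Disjoint Sa Sd := hdisj.mono hSaP hSdP
  have hSsum : ∑ x ∈ S, score x = ∑ x ∈ Sa, score x + ∑ x ∈ Sd, score x := by
    rw [hS, Finset.sum_union hdisjS]
  have hk2 : k / 2 + k / 2 = k := by
    rcases hk with ⟨m, hm⟩; omega
  have hScard : S.card = k := by
    rw [hS, Finset.card_union_of_disjoint hdisjS, hSacard, hSdcard, hk2]
  have hSsub : S ⊆ Pa ∪ Pd := by
    rw [hS]; exact Finset.union_subset_union hSaP hSdP
  constructor
  · intro U hU hUcard hUa hUd
    have hUsplit : U = (U ∩ Pa) ∪ (U ∩ Pd) := by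
      rw [← Finset.inter_union_distrib_left]
      exact (Finset.inter_eq_left.mpr hU).symm
    have hdisjU : Disjoint (U ∩ Pa) (U ∩ Pd) :=
      hdisj.mono Finset.inter_subset_right Finset.inter_subset_right
    have hsum : ∑ x ∈ U, score x = ∑ x ∈ U ∩ Pa, score x + ∑ x ∈ U ∩ Pd, score x := by
      conv_lhs => rw [hUsplit]
      exact Finset.sum_union hdisjU
    have ha := top_sum_max Pa Sa (U ∩ Pa) score Finset.inter_subset_right
      (by rw [hUa, hSacard]) hSatop
    have hd := top_sum_max Pd Sd (U ∩ Pd) score Finset.inter_subset_right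
      (by rw [hUd, hSdcard]) hSdtop
    rw [hsum, hSsum]
    linarith
  · refine ⟨S, hSsub, hScard, ?_, rfl⟩
    intro x hx y hy
    rcases Finset.mem_sdiff.mp hy with ⟨hyP, hyS⟩
    have hcards : Sa.card = Sd.card := by rw [hSacard, hSdcard]
    have crossAD := cross_top Pa Pd score hident Sa Sd hSaP hSdP hcards hSatop hSdtop
    have crossDA := cross_top Pd Pa score hident.symm Sd Sa hSdP hSaP hcards.symm hSdtop hSatop
    rw [hS] at hx hyS
    rcases Finset.mem_union.mp hx with hxa | hxd
    · rcases Finset.mem_union.mp hyP with hya | hyd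
      · exact hSatop x hxa y (Finset.mem_sdiff.mpr ⟨hya, fun h => hyS (Finset.mem_union_left _ h)⟩)
      · exact crossAD x hxa y (Finset.mem_sdiff.mpr ⟨hyd, fun h => hyS (Finset.mem_union_right _ h)⟩)
    · rcases Finset.mem_union.mp hyP with hya | hyd
      · exact crossDA x hxd y (Finset.mem_sdiff.mpr ⟨hya, fun h => hyS (Finset.mem_union_left _ h)⟩)
      · exact hSdtop x hxd y (Finset.mem_sdiff.mpr ⟨hyd, fun h => hyS (Finset.mem_union_right _ h)⟩)
end
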